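/- Let V : ℝ → ℝ be continuous and periodic with period 1. For each integer k ≥ 1 define λ_k = sup over ψ : ℤ/kℤ → ℝ with (1/k)·∑_j ψ(j)² = 1 of { −∑_{j ∈ ℤ/kℤ}(ψ(j+1) − ψ(j))² + ∑_{j ∈ ℤ/kℤ} ψ(j)²·V(j/k) }. Then lim_{k→∞} (1/k)·λ_k = sup_{x ∈ [0,1]} V(x). -/

import Mathlib

open Finset

/-- Lipschitz bound for the tent bump function. -/
private lemma bump_lip (w p x y : ℝ) :
    |max 0 (w/2 - |x - p|) - max 0 (w/2 - |y - p|)| ≤ |x - y| := by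
  have h1 : |max (w/2 - |x - p|) 0 - max (w/2 - |y - p|) 0|
      ≤ |(w/2 - |x - p|) - (w/2 - |y - p|)| := abs_max_sub_max_le_abs _ _ _
  rw [max_comm (0:ℝ), max_comm (0:ℝ)]
  refine h1.trans ?_
  have h2 : (w/2 - |x - p|) - (w/2 - |y - p|) = |y - p| - |x - p| := by ring
  rw [h2]
  refine (abs_abs_sub_abs_le_abs_sub _ _).trans ?_
  have h3 : (y - p) - (x - p) = y - x := by ring
  rw [h3, abs_sub_comm]

set_option maxHeartbeats 1000000 in
/-- For a continuous `1`-periodic potential `V`, the principal eigenvalue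
`λ_k = sup { −∑ (ψ(j+1) − ψ(j))² + ∑ ψ(j)²·V(j/k) : (1/k)∑ψ(j)² = 1 }` of
`k·L_k + k·V_k` satisfies `(1/k)·λ_k → sup_{x∈[0,1]} V(x)` as `k → ∞`. -/
theorem eigenvalue_limit (V : ℝ → ℝ) (hV : Continuous V)
    (hper : Function.Periodic V 1) :
    Filter.Tendsto
      (fun k : ℕ =>
        (1 / ((k : ℝ) + 1)) *
          sSup {y : ℝ | ∃ ψ : ZMod (k + 1) → ℝ,
            (1 / ((k : ℝ) + 1)) * ∑ j : ZMod (k + 1), ψ j ^ 2 = 1 ∧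
            y = -∑ j : ZMod (k + 1), (ψ (j + 1) - ψ j) ^ 2 +
              ∑ j : ZMod (k + 1), ψ j ^ 2 * V ((j.val : ℝ) / ((k : ℝ) + 1))})
      Filter.atTop (nhds (sSup (V '' Set.Icc 0 1))) := by
  set M := sSup (V '' Set.Icc 0 1) with hMdef
  have hIcc : (Set.Icc (0:ℝ) 1).Nonempty := Set.nonempty_Icc.2 zero_le_one
  have hbdd : BddAbove (V '' Set.Icc 0 1) := (isCompact_Icc.image hV).bddAbove
  obtain ⟨x₀, hx₀I, hx₀⟩ := isCompact_Icc.exists_isMaxOn hIcc hV.continuousOn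
  have hMx : M = V x₀ := by
    refine le_antisymm (csSup_le (hIcc.image V) ?_) (le_csSup hbdd ⟨x₀, hx₀I, rfl⟩)
    rintro y ⟨x, hx, rfl⟩
    exact hx₀ hx
  have hVle : ∀ x : ℝ, x ∈ Set.Icc (0:ℝ) 1 → V x ≤ M := fun x hx => le_csSup hbdd ⟨x, hx, rfl⟩
  -- find a maximizer in [0,1)
  obtain ⟨x₁, hx₁0, hx₁1, hVx₁⟩ : ∃ x₁ : ℝ, 0 ≤ x₁ ∧ x₁ < 1 ∧ V x₁ = M := by
    rcases lt_or_eq_of_le hx₀I.2 with h | h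
    · exact ⟨x₀, hx₀I.1, h, hMx.symm⟩
    · refine ⟨0, le_refl 0, one_pos, ?_⟩
      have h0 : V (0 + 1) = V 0 := hper 0
      rw [zero_add] at h0
      rw [hMx, h, ← h0]
  rw [Metric.tendsto_atTop]
  intro ε hε
  -- continuity at x₁
  obtain ⟨δ, hδ, hδV⟩ : ∃ δ > 0, ∀ x : ℝ, |x - x₁| < δ → |V x - V x₁| < ε / 4 := by
    obtain ⟨δ, hδ, h⟩ := Metric.continuous_iff.1 hV x₁ (ε / 4) (by linarith)
    exact ⟨δ, hδ, fun x hx => h x (by simpa [Real.dist_eq] using hx)⟩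
  set w : ℝ := min δ (1 - x₁) / 2 with hwdef
  have hw : 0 < w := by
    have : 0 < min δ (1 - x₁) := lt_min hδ (by linarith)
    positivity
  have hwδ : w < δ := by
    have h1 : min δ (1 - x₁) ≤ δ := min_le_left _ _
    have : w ≤ δ / 2 := by rw [hwdef]; linarith
    linarith
  have hw1 : x₁ + w < 1 := by
    have h1 : min δ (1 - x₁) ≤ 1 - x₁ := min_le_right _ _
    have : w ≤ (1 - x₁) / 2 := by rw [hwdef]; linarith
    linarith
  set p : ℝ := x₁ + w / 2 with hpdef
  set f : ℝ → ℝ := fun x => max 0 (w/2 - |x - p|) with hfdef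
  have hf0 : ∀ x, 0 ≤ f x := fun x => le_max_left _ _
  have hfp : f p = w / 2 := by
    simp only [hfdef, sub_self, abs_zero, sub_zero]
    exact max_eq_right (by linarith)
  have hfzero : ∀ x : ℝ, w / 2 ≤ |x - p| → f x = 0 := by
    intro x hx
    simp only [hfdef]
    exact max_eq_left (by linarith)
  have hfsupp : ∀ x : ℝ, f x ≠ 0 → |x - x₁| < δ := by
    intro x hx
    have h1 : |x - p| < w / 2 := by
      by_contra h
      exact hx (hfzero x (le_of_not_gt h))
    have h2 : |x - x₁| ≤ |x - p| + |p - x₁| := abs_sub_le x p x₁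
    have h3 : |p - x₁| = w / 2 := by
      rw [hpdef, add_sub_cancel_left, abs_of_pos (by linarith : (0:ℝ) < w/2)]
    rw [h3] at h2
    linarith
  have hVsupp : ∀ x : ℝ, f x ≠ 0 → M - ε / 4 ≤ V x := by
    intro x hx
    have h := abs_lt.1 (hδV x (hfsupp x hx))
    rw [hVx₁] at h
    linarith [h.1]
  have hf0zero : f 0 = 0 := by
    apply hfzero
    rw [zero_sub, abs_neg, abs_of_pos (by rw [hpdef]; linarith)]
    rw [hpdef]; linarith
  -- choose N
  obtain ⟨N₀, hN₀⟩ := exists_nat_ge (max (max (4 / w) ((x₁ + w) / (1 - x₁ - w))) (64 / (w^2 * ε)))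
  refine ⟨max N₀ 1, fun k hk => ?_⟩
  have hk1 : 1 ≤ k := le_trans (le_max_right _ _) hk
  have hkN₀ : (N₀ : ℝ) ≤ (k : ℝ) := Nat.cast_le.2 (le_trans (le_max_left _ _) hk)
  beta_reduce
  set E := {y : ℝ | ∃ ψ : ZMod (k + 1) → ℝ,
      (1 / ((k : ℝ) + 1)) * ∑ j : ZMod (k + 1), ψ j ^ 2 = 1 ∧
      y = -∑ j : ZMod (k + 1), (ψ (j + 1) - ψ j) ^ 2 +
        ∑ j : ZMod (k + 1), ψ j ^ 2 * V ((j.val : ℝ) / ((k : ℝ) + 1))} with hEdef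
  set K : ℝ := (k : ℝ) + 1 with hKdef
  have hKpos : (0:ℝ) < K := by positivity
  have hK4w : 4 / w ≤ K := by
    have := le_trans (le_trans (le_max_left _ _) (le_max_left _ _)) hN₀
    linarith
  have hKx : (x₁ + w) / (1 - x₁ - w) ≤ (k : ℝ) := by
    have := le_trans (le_trans (le_max_right _ _) (le_max_left _ _)) hN₀
    linarith
  have hKε : 64 / (w^2 * ε) ≤ K := by
    have := le_trans (le_max_right _ _) hN₀
    linarith
  have hkK : x₁ + w ≤ (k : ℝ) / K := by
    have h1 : 0 < 1 - x₁ - w := by linarith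
    rw [le_div_iff₀ hKpos]
    rw [div_le_iff₀ h1] at hKx
    nlinarith
  haveI : Fact (1 < k + 1) := ⟨by omega⟩
  haveI : NeZero (k + 1) := ⟨by omega⟩
  -- the trial function
  set S : ℝ := ∑ j : ZMod (k + 1), f ((j.val : ℝ) / K) ^ 2 with hSdef
  have hjstar : ∃ j : ZMod (k + 1), w / 4 ≤ f ((j.val : ℝ) / K) := by
    have hppos : 0 < p := by rw [hpdef]; linarith
    have hKp0 : 0 ≤ K * p := by positivity
    set m : ℕ := (⌊K * p⌋).toNat with hmdef
    have hfl : ((m : ℕ) : ℝ) = ((⌊K * p⌋ : ℤ) : ℝ) := by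
      rw [hmdef]
      exact_mod_cast Int.toNat_of_nonneg (Int.floor_nonneg.2 hKp0)
    have hm1 : (m : ℝ) ≤ K * p := by
      rw [hfl]
      exact Int.floor_le _
    have hm2 : K * p < (m : ℝ) + 1 := by
      rw [hfl]
      exact Int.lt_floor_add_one _
    have hp1 : p < 1 := by rw [hpdef]; linarith
    have hmk : m < k + 1 := by
      have h1 : (m : ℝ) < (k : ℝ) + 1 := by nlinarith
      exact_mod_cast (by push_cast; linarith : ((m : ℕ) : ℝ) < ((k + 1 : ℕ) : ℝ))
    refine ⟨(m : ZMod (k + 1)), ?_⟩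
    rw [ZMod.val_cast_of_lt hmk]
    have hdist : |(m : ℝ) / K - p| ≤ 1 / K := by
      have heq : (m : ℝ) / K - p = ((m : ℝ) - K * p) / K := by field_simp
      rw [heq, abs_div, abs_of_pos hKpos, div_le_div_iff₀ hKpos hKpos]
      have habs : |(m : ℝ) - K * p| ≤ 1 := abs_le.2 ⟨by linarith, by linarith⟩
      nlinarith
    have h1K : 1 / K ≤ w / 4 := by
      rw [div_le_div_iff₀ hKpos (by norm_num : (0:ℝ) < 4)]
      rw [div_le_iff₀ hw] at hK4w
      nlinarith
    have hlip : |f ((m : ℝ) / K) - f p| ≤ 1 / K := le_trans (bump_lip w p _ _) hdist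
    have h := abs_le.1 hlip
    rw [hfp] at h
    linarith [h.1]
  obtain ⟨jstar, hjs⟩ := hjstar
  have hS : w ^ 2 / 16 ≤ S := by
    have h1 : f ((jstar.val : ℝ) / K) ^ 2 ≤ S := by
      rw [hSdef]
      exact Finset.single_le_sum (f := fun j : ZMod (k+1) => f ((j.val : ℝ) / K) ^ 2)
        (fun i _ => sq_nonneg _) (Finset.mem_univ jstar)
    nlinarith [hf0 ((jstar.val : ℝ) / K)]
  have hSpos : 0 < S := lt_of_lt_of_le (by positivity) hS
  set c : ℝ := Real.sqrt (K / S) with hcdef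
  have hc2 : c ^ 2 = K / S := Real.sq_sqrt (div_nonneg hKpos.le hSpos.le)
  set ψ : ZMod (k + 1) → ℝ := fun j => c * f ((j.val : ℝ) / K) with hψdef
  have hψsum : ∑ j : ZMod (k + 1), ψ j ^ 2 = K := by
    have h1 : ∀ j : ZMod (k + 1), ψ j ^ 2 = (K / S) * f ((j.val : ℝ) / K) ^ 2 := by
      intro j
      rw [hψdef]
      simp only [mul_pow]
      rw [hc2]
    rw [Finset.sum_congr rfl (fun j _ => h1 j), ← Finset.mul_sum, ← hSdef]
    field_simp
  have hnorm : (1 / K) * ∑ j : ZMod (k + 1), ψ j ^ 2 = 1 := by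
    rw [hψsum]
    field_simp
  -- gradient bound
  have hgrad : ∑ j : ZMod (k + 1), (ψ (j + 1) - ψ j) ^ 2 ≤ 16 / w ^ 2 := by
    have hterm : ∀ j : ZMod (k + 1), (ψ (j + 1) - ψ j) ^ 2 ≤ (K / S) * (1 / K ^ 2) := by
      intro j
      have hval : (j + 1).val = (j.val + 1) % (k + 1) := by
        rw [ZMod.val_add, ZMod.val_one]
      have hjval : j.val < k + 1 := ZMod.val_lt j
      rcases Nat.lt_or_ge (j.val + 1) (k + 1) with h | h
      · -- no wrap
        have hval' : (j + 1).val = j.val + 1 := by rw [hval, Nat.mod_eq_of_lt h]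
        have hdist : |(((j + 1).val : ℝ) / K) - ((j.val : ℝ) / K)| = 1 / K := by
          rw [hval']
          push_cast
          rw [div_sub_div_same]
          have h4 : ((j.val : ℝ) + 1 - (j.val : ℝ)) = 1 := by ring
          rw [h4, abs_of_pos (by positivity)]
        have hd : |ψ (j + 1) - ψ j| ≤ c * (1 / K) := by
          rw [hψdef]
          simp only
          rw [← mul_sub, abs_mul, abs_of_nonneg (Real.sqrt_nonneg _)]
          exact mul_le_mul_of_nonneg_left
            (le_trans (bump_lip w p _ _) (le_of_eq hdist)) (Real.sqrt_nonneg _)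
        calc (ψ (j + 1) - ψ j) ^ 2 = |ψ (j + 1) - ψ j| ^ 2 := (sq_abs _).symm
          _ ≤ (c * (1 / K)) ^ 2 := pow_le_pow_left₀ (abs_nonneg _) hd 2
          _ = (K / S) * (1 / K ^ 2) := by rw [mul_pow, hc2, div_pow, one_pow]
      · -- wrap: j.val = k
        have hjk : j.val = k := by omega
        have hval' : (j + 1).val = 0 := by rw [hval, hjk]; simp
        have hf1 : f (((j + 1).val : ℝ) / K) = 0 := by
          rw [hval']
          push_cast
          rw [zero_div]
          exact hf0zero
        have hf2 : f ((j.val : ℝ) / K) = 0 := by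
          apply hfzero
          rw [hjk]
          have h2 : p ≤ (k : ℝ) / K - w / 2 := by rw [hpdef]; linarith
          rw [abs_of_nonneg (by linarith : (0:ℝ) ≤ (k : ℝ) / K - p)]
          linarith
        have h5 : ψ (j + 1) - ψ j = 0 := by
          rw [hψdef]
          simp only
          rw [hf1, hf2]
          ring
        rw [h5]
        have h6 : (0:ℝ) ≤ K / S := div_nonneg hKpos.le hSpos.le
        have h7 : (0:ℝ) ≤ 1 / K ^ 2 := by
          have := hKpos
          positivity
        nlinarith [mul_nonneg h6 h7]
    calc ∑ j : ZMod (k + 1), (ψ (j + 1) - ψ j) ^ 2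
        ≤ ∑ _j : ZMod (k + 1), (K / S) * (1 / K ^ 2) :=
          Finset.sum_le_sum (fun j _ => hterm j)
      _ = ((k : ℝ) + 1) * ((K / S) * (1 / K ^ 2)) := by
          rw [Finset.sum_const, Finset.card_univ, ZMod.card]
          push_cast
          ring
      _ = 1 / S := by
          rw [hKdef]
          field_simp
      _ ≤ 16 / w ^ 2 := by
          rw [div_le_div_iff₀ hSpos (by positivity)]
          nlinarith
  -- potential bound
  have hpot : (M - ε / 4) * K ≤ ∑ j : ZMod (k + 1), ψ j ^ 2 * V ((j.val : ℝ) / K) := by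
    have hterm : ∀ j : ZMod (k + 1),
        ψ j ^ 2 * (M - ε / 4) ≤ ψ j ^ 2 * V ((j.val : ℝ) / K) := by
      intro j
      rcases eq_or_ne (f ((j.val : ℝ) / K)) 0 with h | h
      · have hz : ψ j = 0 := by rw [hψdef]; simp only; rw [h, mul_zero]
        rw [hz]
        simp
      · exact mul_le_mul_of_nonneg_left (hVsupp _ h) (sq_nonneg _)
    calc (M - ε / 4) * K = ∑ j : ZMod (k + 1), ψ j ^ 2 * (M - ε / 4) := by
          rw [← Finset.sum_mul, hψsum]; ring
      _ ≤ _ := Finset.sum_le_sum (fun j _ => hterm j)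
  -- the witness value
  have hymem : (-∑ j : ZMod (k + 1), (ψ (j + 1) - ψ j) ^ 2 +
      ∑ j : ZMod (k + 1), ψ j ^ 2 * V ((j.val : ℝ) / K)) ∈ E := ⟨ψ, hnorm, rfl⟩
  -- upper bound on the set
  have hub : ∀ z ∈ E, z ≤ K * M := by
    rintro z ⟨φ, hφ1, rfl⟩
    have hφsum : ∑ j : ZMod (k + 1), φ j ^ 2 = K := by
      have h0 : (1 / K) * ∑ j : ZMod (k + 1), φ j ^ 2 = 1 := hφ1
      field_simp at h0
      linarith [h0]
    have hP : ∑ j : ZMod (k + 1), φ j ^ 2 * V ((j.val : ℝ) / K) ≤ K * M := by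
      calc ∑ j : ZMod (k + 1), φ j ^ 2 * V ((j.val : ℝ) / K)
          ≤ ∑ j : ZMod (k + 1), φ j ^ 2 * M := by
            refine Finset.sum_le_sum (fun j _ => ?_)
            refine mul_le_mul_of_nonneg_left (hVle _ ⟨by positivity, ?_⟩) (sq_nonneg _)
            rw [div_le_one hKpos]
            have : j.val < k + 1 := ZMod.val_lt j
            have : (j.val : ℝ) ≤ (k : ℝ) := by exact_mod_cast Nat.lt_succ_iff.1 this
            linarith
        _ = K * M := by rw [← Finset.sum_mul, hφsum]
    have hG : 0 ≤ ∑ j : ZMod (k + 1), (φ (j + 1) - φ j) ^ 2 :=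
      Finset.sum_nonneg (fun j _ => sq_nonneg _)
    linarith
  have hEne : E.Nonempty := ⟨_, hymem⟩
  have hEbdd : BddAbove E := ⟨K * M, hub⟩
  have hsup_le : sSup E ≤ K * M := csSup_le hEne hub
  have hsup_ge : -(16 / w ^ 2) + (M - ε / 4) * K ≤ sSup E := by
    refine le_trans ?_ (le_csSup hEbdd hymem)
    linarith
  -- finish
  have hε4 : 16 / (w ^ 2 * K) ≤ ε / 4 := by
    rw [div_le_div_iff₀ (by positivity) (by norm_num : (0:ℝ) < 4)]
    rw [div_le_iff₀ (by positivity : (0:ℝ) < w^2 * ε)] at hKε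
    nlinarith
  have hupper : (1 / K) * sSup E ≤ M := by
    have := mul_le_mul_of_nonneg_left hsup_le (by positivity : (0:ℝ) ≤ 1 / K)
    calc (1 / K) * sSup E ≤ (1 / K) * (K * M) := this
      _ = M := by field_simp
  have hlower : M - ε / 2 ≤ (1 / K) * sSup E := by
    have h1 := mul_le_mul_of_nonneg_left hsup_ge (by positivity : (0:ℝ) ≤ 1 / K)
    have h2 : (1 / K) * (-(16 / w ^ 2) + (M - ε / 4) * K)
        = -(16 / (w ^ 2 * K)) + (M - ε / 4) := by
      field_simp
    rw [h2] at h1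
    linarith
  rw [Real.dist_eq, abs_lt]
  constructor <;> linarith
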